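/- Let k ≥ 1 be an integer, p ∈ [2,∞), a ≥ 0, and ε ≥ 0. Then the set Ĥ := {x ∈ ℝ^k : there exists σ ∈ {−1,1}^k with ⟨x − aσ⟩_p ≤ ε} (where aσ := (aσ₁,…,aσ_k)) is Schur²-convex. -/

import Mathlib

open MeasureTheory ProbabilityTheory Filter
open scoped ENNReal

noncomputable section

/-- The standard Gaussian measure on `ℝ^k` (the `k`-fold product of `N(0,1)`). -/
def stdGaussianPi (k : ℕ) : MeasureTheory.Measure (Fin k → ℝ) :=
  MeasureTheory.Measure.pi fun _ => ProbabilityTheory.gaussianReal 0 1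

/-- `a` majorizes `b`: the total sums agree and, for every `j`, the sum of the `j`
largest entries of `a` is at least the sum of the `j` largest entries of `b`
(formulated equivalently: every sum of entries of `b` over an index set is dominated by
a sum of entries of `a` over an index set of the same cardinality). -/
def Majorizes {k : ℕ} (a b : Fin k → ℝ) : Prop :=
  (∑ i, a i = ∑ i, b i) ∧
  ∀ s : Finset (Fin k), ∃ t : Finset (Fin k),
    t.card = s.card ∧ ∑ i ∈ s, b i ≤ ∑ i ∈ t, a i

/-- The coordinatewise square `x² = (x₁², …, x_k²)` of a vector. -/
def sqv {k : ℕ} (x : Fin k → ℝ) : Fin k → ℝ := fun i => (x i) ^ 2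

/-- `f` is Schur²-concave: `f x ≤ f y` whenever `x²` majorizes `y²`. -/
def Schur2Concave {k : ℕ} {α : Type*} [Preorder α] (f : (Fin k → ℝ) → α) : Prop :=
  ∀ x y : Fin k → ℝ, Majorizes (sqv x) (sqv y) → f x ≤ f y

/-- `f` is Schur²-convex: `f x ≥ f y` whenever `x²` majorizes `y²`. -/
def Schur2Convex {k : ℕ} {α : Type*} [Preorder α] (f : (Fin k → ℝ) → α) : Prop :=
  ∀ x y : Fin k → ℝ, Majorizes (sqv x) (sqv y) → f y ≤ f x

/-- A set `A` is Schur²-convex if `x ∈ A` and `y² ⪯ x²` imply `y ∈ A`. -/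
def Schur2ConvexSet {k : ℕ} (A : Set (Fin k → ℝ)) : Prop :=
  ∀ x y : Fin k → ℝ, x ∈ A → Majorizes (sqv x) (sqv y) → y ∈ A

/-- A set `A` is Schur²-concave if `x ∈ A` and `y² ⪰ x²` imply `y ∈ A`. -/
def Schur2ConcaveSet {k : ℕ} (A : Set (Fin k → ℝ)) : Prop :=
  ∀ x y : Fin k → ℝ, x ∈ A → Majorizes (sqv y) (sqv x) → y ∈ A

open Classical in
/-- The `p`-mean `⟨x⟩_p` for `p ∈ [-∞, ∞]` (coded as `p : EReal`):
`⟨x⟩_p = ((1/k) ∑ |x_j|^p)^(1/p)` for real `p ≠ 0`, with `⟨x⟩_p := 0` when `p < 0` and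
some `x_j = 0`; `⟨x⟩_0 = ∏ |x_j|^(1/k)`; `⟨x⟩_∞ = max |x_j|`; `⟨x⟩_{-∞} = min |x_j|`. -/
noncomputable def pMean {k : ℕ} (p : EReal) (x : Fin k → ℝ) : ℝ :=
  if p = ⊤ then ⨆ j, |x j|
  else if p = ⊥ then ⨅ j, |x j|
  else if p = 0 then ∏ j, |x j| ^ ((k : ℝ)⁻¹)
  else if p.toReal < 0 ∧ ∃ j, x j = 0 then 0
  else ((k : ℝ)⁻¹ * ∑ j, |x j| ^ p.toReal) ^ (p.toReal)⁻¹

/-! ### Auxiliary lemmas for the proof -/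

section KaramataAux

open Finset

/-- Karamata-type inequality for sequences indexed by `ℕ`, proved via tangent lines
and Abel summation. -/
lemma karamata_nat (f d : ℝ → ℝ) (k : ℕ) (a b : ℕ → ℝ)
    (ha0 : ∀ i, 0 ≤ a i) (hb0 : ∀ i, 0 ≤ b i)
    (hbanti : ∀ i j, i ≤ j → b j ≤ b i)
    (hbz : ∀ i, k ≤ i → b i = 0) (haz : ∀ i, k ≤ i → a i = 0)
    (hsum : ∑ i ∈ Finset.range k, a i = ∑ i ∈ Finset.range k, b i)
    (hpre : ∀ j, ∑ i ∈ Finset.range j, b i ≤ ∑ i ∈ Finset.range j, a i)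
    (tangent : ∀ t u : ℝ, 0 < t → 0 ≤ u → f t + d t * (u - t) ≤ f u)
    (dmono : ∀ s t : ℝ, 0 < s → s ≤ t → d s ≤ d t) :
    ∑ i ∈ Finset.range k, f (b i) ≤ ∑ i ∈ Finset.range k, f (a i) := by
  have hbz' : ∀ n m, b n = 0 → n ≤ m → b m = 0 := fun n m h hnm =>
    le_antisymm (h ▸ hbanti n m hnm) (hb0 m)
  have hSbc : ∀ n m, n ≤ m → b n = 0 →
      ∑ i ∈ Finset.range m, b i = ∑ i ∈ Finset.range n, b i := by
    intro n m hnm h0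
    symm
    apply Finset.sum_subset (Finset.range_subset_range.2 hnm)
    intro i _ hni
    exact hbz' n i h0 (by simpa using hni)
  have hgz : ∀ n, b n = 0 → ∑ i ∈ Finset.range n, a i = ∑ i ∈ Finset.range n, b i := by
    intro n h0
    rcases le_or_gt n k with h | h
    · have e1 : ∑ i ∈ Finset.range k, b i = ∑ i ∈ Finset.range n, b i := hSbc n k h h0
      have e2 : ∑ i ∈ Finset.range n, a i ≤ ∑ i ∈ Finset.range k, a i :=
        Finset.sum_le_sum_of_subset_of_nonneg (Finset.range_subset_range.2 h) (fun i _ _ => ha0 i)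
      have e3 := hpre n
      linarith
    · have ea : ∑ i ∈ Finset.range n, a i = ∑ i ∈ Finset.range k, a i := by
        symm
        apply Finset.sum_subset (Finset.range_subset_range.2 h.le)
        intro i _ hni
        exact haz i (by simpa using hni)
      have eb : ∑ i ∈ Finset.range n, b i = ∑ i ∈ Finset.range k, b i := by
        symm
        apply Finset.sum_subset (Finset.range_subset_range.2 h.le)
        intro i _ hni
        exact hbz i (by simpa using hni)
      rw [ea, eb, hsum]
  have haz' : ∀ n, n < k → b n = 0 → a n = 0 := by
    intro n hn h0
    have h1 := hgz n h0
    have h2 := hgz (n + 1) (hbz' n (n + 1) h0 (Nat.le_succ n))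
    rw [Finset.sum_range_succ, Finset.sum_range_succ] at h2
    have : a n = b n := by linarith
    rw [this, h0]
  have habel : ∀ n, d (b n) *
      ((∑ i ∈ Finset.range (n + 1), a i) - ∑ i ∈ Finset.range (n + 1), b i)
      ≤ ∑ i ∈ Finset.range (n + 1), d (b i) * (a i - b i) := by
    intro n
    induction n with
    | zero => simp [Finset.sum_range_one]
    | succ n ih =>
      rw [Finset.sum_range_succ (f := fun i => d (b i) * (a i - b i)),
        Finset.sum_range_succ (f := a), Finset.sum_range_succ (f := b)]
      have hg : 0 ≤ (∑ i ∈ Finset.range (n + 1), a i) - ∑ i ∈ Finset.range (n + 1), b i := by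
        linarith [hpre (n + 1)]
      have hdd : d (b (n + 1)) *
          ((∑ i ∈ Finset.range (n + 1), a i) - ∑ i ∈ Finset.range (n + 1), b i)
          ≤ d (b n) *
          ((∑ i ∈ Finset.range (n + 1), a i) - ∑ i ∈ Finset.range (n + 1), b i) := by
        rcases eq_or_lt_of_le (hb0 (n + 1)) with hz | hpos
        · have h0 := hgz (n + 1) hz.symm
          have : (∑ i ∈ Finset.range (n + 1), a i) - ∑ i ∈ Finset.range (n + 1), b i = 0 := by
            rw [h0]; ring
          rw [this]
          simp
        · exact mul_le_mul_of_nonneg_right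
            (dmono _ _ hpos (hbanti n (n + 1) (Nat.le_succ n))) hg
      have hring : d (b (n + 1)) *
          ((∑ i ∈ Finset.range (n + 1), a i) + a (n + 1)
            - ((∑ i ∈ Finset.range (n + 1), b i) + b (n + 1)))
          = d (b (n + 1)) *
          ((∑ i ∈ Finset.range (n + 1), a i) - ∑ i ∈ Finset.range (n + 1), b i)
          + d (b (n + 1)) * (a (n + 1) - b (n + 1)) := by ring
      linarith [ih, hdd]
  have hpos : 0 ≤ ∑ i ∈ Finset.range k, d (b i) * (a i - b i) := by
    cases k with
    | zero => simp
    | succ m =>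
      have hzk : (∑ i ∈ Finset.range (m + 1), a i) - ∑ i ∈ Finset.range (m + 1), b i = 0 := by
        rw [hsum]; ring
      calc (0 : ℝ) = d (b m) *
            ((∑ i ∈ Finset.range (m + 1), a i) - ∑ i ∈ Finset.range (m + 1), b i) := by
              rw [hzk]; ring
        _ ≤ _ := habel m
  have hterm : ∀ i ∈ Finset.range k, f (b i) + d (b i) * (a i - b i) ≤ f (a i) := by
    intro i hi
    rcases eq_or_lt_of_le (hb0 i) with hz | hpos'
    · have haz0 : a i = 0 := haz' i (Finset.mem_range.1 hi) hz.symm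
      rw [← hz, haz0]
      simp
    · exact tangent (b i) (a i) hpos' (ha0 i)
  have hsum_split : ∑ i ∈ Finset.range k, (f (b i) + d (b i) * (a i - b i))
      = (∑ i ∈ Finset.range k, f (b i)) + ∑ i ∈ Finset.range k, d (b i) * (a i - b i) :=
    Finset.sum_add_distrib
  have hmain := Finset.sum_le_sum hterm
  rw [hsum_split] at hmain
  linarith

/-- Sum of an antitone sequence over any finset of `ℕ` is at most the sum over the
initial segment of the same size. -/
lemma sum_le_prefix_nat {ψ : ℕ → ℝ} (hanti : ∀ i j, i ≤ j → ψ j ≤ ψ i) (t : Finset ℕ) :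
    ∑ i ∈ t, ψ i ≤ ∑ i ∈ Finset.range t.card, ψ i := by
  set j := t.card with hj
  let e := t.orderIsoOfFin hj.symm
  have hmono : StrictMono fun m : Fin j => ((e m : ℕ)) := by
    intro m1 m2 h
    exact e.strictMono h
  have hle' : ∀ n : ℕ, ∀ h : n < j, n ≤ ((e ⟨n, h⟩ : ℕ)) := by
    intro n
    induction n with
    | zero => intro h; exact Nat.zero_le _
    | succ n ih =>
      intro h
      have hn : n < j := Nat.lt_of_succ_lt h
      have h1 := ih hn
      have h2 : ((e ⟨n, hn⟩ : ℕ)) < ((e ⟨n + 1, h⟩ : ℕ)) := hmono (by simp [Fin.lt_def])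
      omega
  have hle : ∀ m : Fin j, (m : ℕ) ≤ ((e m : ℕ)) := by
    intro m
    have := hle' m m.isLt
    simpa using this
  calc ∑ i ∈ t, ψ i = ∑ i : t, ψ i := (Finset.sum_coe_sort t ψ).symm
    _ = ∑ m : Fin j, ψ (e m) := (Equiv.sum_comp e.toEquiv (fun i : t => ψ i)).symm
    _ ≤ ∑ m : Fin j, ψ (m : ℕ) := Finset.sum_le_sum fun m _ => hanti _ _ (hle m)
    _ = ∑ i ∈ Finset.range j, ψ i := Fin.sum_univ_eq_sum_range _ _

variable {k : ℕ}

/-- Reindexing a vector on `Fin k` by a permutation, as a sequence on `ℕ` (zero beyond `k`). -/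
noncomputable def mkseq (k : ℕ) (v : Fin k → ℝ) (π : Equiv.Perm (Fin k)) : ℕ → ℝ :=
  fun i => if h : i < k then v (π ⟨i, h⟩) else 0

lemma mkseq_sum_image (v : Fin k → ℝ) (π : Equiv.Perm (Fin k)) {j : ℕ} (hj : j ≤ k) :
    ∑ i ∈ Finset.range j, mkseq k v π i
      = ∑ u ∈ Finset.image π (Finset.univ.filter fun u : Fin k => (u : ℕ) < j), v u := by
  have himg : Finset.image Fin.val (Finset.univ.filter fun u : Fin k => (u : ℕ) < j)
      = Finset.range j := by
    ext m
    simp only [Finset.mem_image, Finset.mem_filter, Finset.mem_univ, true_and, Finset.mem_range]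
    constructor
    · rintro ⟨u, hu, rfl⟩; exact hu
    · intro hm; exact ⟨⟨m, lt_of_lt_of_le hm hj⟩, hm, rfl⟩
  rw [← himg, Finset.sum_image (fun u _ u' _ h => Fin.val_injective h),
    Finset.sum_image (fun u _ u' _ h => π.injective h)]
  apply Finset.sum_congr rfl
  intro u _
  simp [mkseq, u.isLt]

lemma card_filter_lt {j : ℕ} (hj : j ≤ k) :
    (Finset.univ.filter fun u : Fin k => (u : ℕ) < j).card = j := by
  have himg : Finset.image Fin.val (Finset.univ.filter fun u : Fin k => (u : ℕ) < j)
      = Finset.range j := by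
    ext m
    simp only [Finset.mem_image, Finset.mem_filter, Finset.mem_univ, true_and, Finset.mem_range]
    constructor
    · rintro ⟨u, hu, rfl⟩; exact hu
    · intro hm; exact ⟨⟨m, lt_of_lt_of_le hm hj⟩, hm, rfl⟩
  have := Finset.card_image_of_injective
    (Finset.univ.filter fun u : Fin k => (u : ℕ) < j) Fin.val_injective
  rw [himg, Finset.card_range] at this
  exact this.symm

lemma mkseq_total (v : Fin k → ℝ) (π : Equiv.Perm (Fin k)) :
    ∑ i ∈ Finset.range k, mkseq k v π i = ∑ u, v u := by
  rw [mkseq_sum_image v π le_rfl]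
  have h1 : (Finset.univ.filter fun u : Fin k => (u : ℕ) < k) = Finset.univ := by
    apply Finset.filter_true_of_mem
    intro u _
    exact u.isLt
  rw [h1, Finset.image_univ_of_surjective π.surjective]

/-- Karamata's inequality on `Fin k` from the `Majorizes` hypothesis, for a function `f`
convex on `[0,∞)` whose tangent-line inequality and derivative monotonicity are supplied. -/
lemma karamata_fin (f d : ℝ → ℝ)
    (tangent : ∀ t u : ℝ, 0 < t → 0 ≤ u → f t + d t * (u - t) ≤ f u)
    (dmono : ∀ s t : ℝ, 0 < s → s ≤ t → d s ≤ d t)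
    (X Y : Fin k → ℝ) (hX : ∀ i, 0 ≤ X i) (hY : ∀ i, 0 ≤ Y i)
    (maj : Majorizes X Y) : ∑ i, f (Y i) ≤ ∑ i, f (X i) := by
  classical
  set σX := Tuple.sort X with hσX
  set σY := Tuple.sort Y with hσY
  set πX : Equiv.Perm (Fin k) := Fin.revPerm.trans σX with hπX
  set πY : Equiv.Perm (Fin k) := Fin.revPerm.trans σY with hπY
  set A : ℕ → ℝ := mkseq k X πX with hA
  set B : ℕ → ℝ := mkseq k Y πY with hB
  have hAnn : ∀ i, 0 ≤ A i := by
    intro i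
    simp only [hA, mkseq]
    split <;> [exact hX _; exact le_rfl]
  have hBnn : ∀ i, 0 ≤ B i := by
    intro i
    simp only [hB, mkseq]
    split <;> [exact hY _; exact le_rfl]
  have hAz : ∀ i, k ≤ i → A i = 0 := by
    intro i hi; simp [hA, mkseq, Nat.not_lt.2 hi]
  have hBz : ∀ i, k ≤ i → B i = 0 := by
    intro i hi; simp [hB, mkseq, Nat.not_lt.2 hi]
  -- antitonicity of sorted-reversed sequences
  have hstep : ∀ (v : Fin k → ℝ), (∀ i, 0 ≤ v i) → ∀ i,
      mkseq k v (Fin.revPerm.trans (Tuple.sort v)) (i + 1)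
        ≤ mkseq k v (Fin.revPerm.trans (Tuple.sort v)) i := by
    intro v hv i
    by_cases h1 : i + 1 < k
    · have h0 : i < k := by omega
      simp only [mkseq, dif_pos h1, dif_pos h0, Equiv.trans_apply, Fin.revPerm_apply]
      have : Fin.rev (⟨i + 1, h1⟩ : Fin k) ≤ Fin.rev ⟨i, h0⟩ :=
        Fin.rev_le_rev.mpr (by simp [Fin.le_def])
      exact Tuple.monotone_sort v this
    · by_cases h0 : i < k
      · simp only [mkseq, dif_neg h1, dif_pos h0]
        exact hv _
      · simp [mkseq, dif_neg h1, dif_neg h0]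
  have hBstep : ∀ i, B (i + 1) ≤ B i := hstep Y hY
  have hAstep : ∀ i, A (i + 1) ≤ A i := hstep X hX
  have hBanti : ∀ i j, i ≤ j → B j ≤ B i := fun i j hij => by
    have := antitone_nat_of_succ_le hBstep
    exact this hij
  have hAanti : ∀ i j, i ≤ j → A j ≤ A i := fun i j hij => by
    have := antitone_nat_of_succ_le hAstep
    exact this hij
  -- X u expressed via A
  have hXA : ∀ u : Fin k, X u = A ((πX.symm u : Fin k) : ℕ) := by
    intro u
    simp only [hA, mkseq]
    rw [dif_pos (πX.symm u).isLt]
    congr 1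
    rw [Fin.eta, Equiv.apply_symm_apply]
  have hsum' : ∑ i ∈ Finset.range k, A i = ∑ i ∈ Finset.range k, B i := by
    rw [hA, hB, mkseq_total, mkseq_total, maj.1]
  have hpre : ∀ j, ∑ i ∈ Finset.range j, B i ≤ ∑ i ∈ Finset.range j, A i := by
    intro j
    rcases le_or_gt j k with hj | hj
    · rw [hB, mkseq_sum_image Y πY hj]
      obtain ⟨t, htc, hle⟩ := maj.2
        (Finset.image πY (Finset.univ.filter fun u : Fin k => (u : ℕ) < j))
      have hcard : t.card = j := by
        rw [htc, Finset.card_image_of_injective _ πY.injective, card_filter_lt hj]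
      have h2 : ∑ u ∈ t, X u ≤ ∑ i ∈ Finset.range j, A i := by
        have he : ∑ u ∈ t, X u = ∑ i ∈ Finset.image (fun u : Fin k => ((πX.symm u : Fin k) : ℕ)) t, A i := by
          rw [Finset.sum_image (fun u _ u' _ h => by
            exact πX.symm.injective (Fin.val_injective h))]
          exact Finset.sum_congr rfl fun u _ => hXA u
        rw [he]
        have hcard2 : (Finset.image (fun u : Fin k => ((πX.symm u : Fin k) : ℕ)) t).card = j := by
          rw [Finset.card_image_of_injective _ (fun u u' h => πX.symm.injective (Fin.val_injective h)), hcard]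
        calc ∑ i ∈ Finset.image (fun u : Fin k => ((πX.symm u : Fin k) : ℕ)) t, A i
            ≤ ∑ i ∈ Finset.range (Finset.image (fun u : Fin k => ((πX.symm u : Fin k) : ℕ)) t).card, A i :=
              sum_le_prefix_nat hAanti _
          _ = ∑ i ∈ Finset.range j, A i := by rw [hcard2]
      exact le_trans hle h2
    · have eB : ∑ i ∈ Finset.range j, B i = ∑ i ∈ Finset.range k, B i := by
        symm
        apply Finset.sum_subset (Finset.range_subset_range.2 hj.le)
        intro i _ hni
        exact hBz i (by simpa using hni)
      have eA : ∑ i ∈ Finset.range j, A i = ∑ i ∈ Finset.range k, A i := by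
        symm
        apply Finset.sum_subset (Finset.range_subset_range.2 hj.le)
        intro i _ hni
        exact hAz i (by simpa using hni)
      rw [eA, eB, hsum']
  have hkar := karamata_nat f d k A B hAnn hBnn hBanti hBz hAz hsum' hpre tangent dmono
  -- convert back
  have hconvA : ∑ i ∈ Finset.range k, f (A i) = ∑ u, f (X u) := by
    have h1 : ∑ i ∈ Finset.range k, f (A i) = ∑ i ∈ Finset.range k, mkseq k (fun u => f (X u)) πX i := by
      apply Finset.sum_congr rfl
      intro i hi
      have hik : i < k := Finset.mem_range.1 hi
      simp [hA, mkseq, dif_pos hik]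
    rw [h1, mkseq_total]
  have hconvB : ∑ i ∈ Finset.range k, f (B i) = ∑ u, f (Y u) := by
    have h1 : ∑ i ∈ Finset.range k, f (B i) = ∑ i ∈ Finset.range k, mkseq k (fun u => f (Y u)) πY i := by
      apply Finset.sum_congr rfl
      intro i hi
      have hik : i < k := Finset.mem_range.1 hi
      simp [hB, mkseq, dif_pos hik]
    rw [h1, mkseq_total]
  rw [hconvA, hconvB] at hkar
  exact hkar

end KaramataAux

section PhiAux

open Real

/-- `(w²)^q = |w|^(2q)` for real powers. -/
lemma sq_rpow_eq (w q : ℝ) : ((w ^ 2 : ℝ)) ^ q = |w| ^ (2 * q) := by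
  rw [← sq_abs, ← Real.rpow_natCast |w| 2, ← Real.rpow_mul (abs_nonneg w)]
  norm_num

/-- The function `φ(t) = ((√t - a)²)^(p/2) = |√t - a|^p`. -/
noncomputable def phiF (a p : ℝ) : ℝ → ℝ := fun t => ((Real.sqrt t - a) ^ 2) ^ (p / 2)

/-- The derivative of `phiF` on `(0,∞)`. -/
noncomputable def phiD (a p : ℝ) : ℝ → ℝ := fun t =>
  p / 2 * ((Real.sqrt t - a) ^ 2) ^ (p / 2 - 1)
    * (((2 : ℕ) : ℝ) * (Real.sqrt t - a) ^ 1 * (1 / (2 * Real.sqrt t)))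

lemma phiF_hasDerivAt (a p : ℝ) (hp : 2 ≤ p) {t : ℝ} (ht : 0 < t) :
    HasDerivAt (phiF a p) (phiD a p t) t := by
  have h1 : HasDerivAt Real.sqrt (1 / (2 * Real.sqrt t)) t := Real.hasDerivAt_sqrt ht.ne'
  have h2 : HasDerivAt (fun t => Real.sqrt t - a) (1 / (2 * Real.sqrt t)) t := h1.sub_const a
  have h3 : HasDerivAt (fun t => (Real.sqrt t - a) ^ 2)
      (((2 : ℕ) : ℝ) * (Real.sqrt t - a) ^ 1 * (1 / (2 * Real.sqrt t))) t := h2.pow 2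
  have h4 := h3.rpow_const (p := p / 2) (Or.inr (by linarith))
  convert h4 using 1
  · rfl
  rw [phiD]
  ring

/-- Monotonicity of `u ↦ |u-a|^(p-2) (u-a) / u` on `(0,∞)`. -/
lemma eta_mono {a p : ℝ} (hp : 2 ≤ p) (ha : 0 ≤ a) {u v : ℝ} (hu : 0 < u) (huv : u ≤ v) :
    |u - a| ^ (p - 2) * (u - a) / u ≤ |v - a| ^ (p - 2) * (v - a) / v := by
  have hv : 0 < v := lt_of_lt_of_le hu huv
  rcases le_total v a with hva | hav
  · -- u ≤ v ≤ a
    have hua : u ≤ a := le_trans huv hva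
    have h1 : |u - a| = a - u := by rw [abs_of_nonpos (by linarith)]; ring
    have h2 : |v - a| = a - v := by rw [abs_of_nonpos (by linarith)]; ring
    rw [h1, h2]
    have key : (a - v) ^ (p - 2) * (a - v) / v ≤ (a - u) ^ (p - 2) * (a - u) / u := by
      apply div_le_div₀ (mul_nonneg (Real.rpow_nonneg (by linarith) _) (by linarith))
        (mul_le_mul (Real.rpow_le_rpow (by linarith) (by linarith) (by linarith))
          (by linarith) (by linarith) (Real.rpow_nonneg (by linarith) _)) hu huv
    have e1 : (a - u) ^ (p - 2) * (u - a) / u = -((a - u) ^ (p - 2) * (a - u) / u) := by ring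
    have e2 : (a - v) ^ (p - 2) * (v - a) / v = -((a - v) ^ (p - 2) * (a - v) / v) := by ring
    rw [e1, e2]
    linarith
  · rcases le_total a u with hau | hua
    · -- a ≤ u ≤ v
      rcases eq_or_lt_of_le hau with heq | hlt
      · have hz : u - a = 0 := by rw [← heq]; ring
        rw [hz]
        simp only [mul_zero, zero_div]
        apply div_nonneg (mul_nonneg (Real.rpow_nonneg (abs_nonneg _) _) (by linarith)) hv.le
      · have hu' : 0 < u - a := by linarith
        have hv' : 0 < v - a := by linarith
        have h1 : |u - a| = u - a := abs_of_pos hu'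
        have h2 : |v - a| = v - a := abs_of_pos hv'
        rw [h1, h2, div_le_div_iff₀ hu hv]
        have e1 : (u - a) ^ (p - 2) * (u - a) = (u - a) ^ (p - 1) := by
          rw [show p - 1 = p - 2 + 1 by ring, Real.rpow_add_one hu'.ne']
        have e2 : (v - a) ^ (p - 2) * (v - a) = (v - a) ^ (p - 1) := by
          rw [show p - 1 = p - 2 + 1 by ring, Real.rpow_add_one hv'.ne']
        rw [e1, e2]
        have hq : ((u - a) / (v - a)) ^ (p - 1) ≤ (u - a) / (v - a) := by
          have h01 : 0 < (u - a) / (v - a) := div_pos hu' hv'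
          have hle1 : (u - a) / (v - a) ≤ 1 := by
            rw [div_le_one hv']; linarith
          calc ((u - a) / (v - a)) ^ (p - 1) ≤ ((u - a) / (v - a)) ^ (1 : ℝ) :=
                Real.rpow_le_rpow_of_exponent_ge h01 hle1 (by linarith)
            _ = (u - a) / (v - a) := Real.rpow_one _
        have hd : (u - a) ^ (p - 1) = (v - a) ^ (p - 1) * ((u - a) / (v - a)) ^ (p - 1) := by
          rw [Real.div_rpow hu'.le hv'.le]
          field_simp
        have hr : (u - a) ^ (p - 1) ≤ (v - a) ^ (p - 1) * ((u - a) / (v - a)) := by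
          rw [hd]
          exact mul_le_mul_of_nonneg_left hq (Real.rpow_nonneg hv'.le _)
        have hlin : (u - a) * v ≤ u * (v - a) := by nlinarith
        have hlast : (v - a) ^ (p - 1) * ((u - a) / (v - a)) * v ≤ (v - a) ^ (p - 1) * u := by
          have hrw : (v - a) ^ (p - 1) * ((u - a) / (v - a)) * v
              = (v - a) ^ (p - 1) * ((u - a) * v / (v - a)) := by ring
          rw [hrw]
          apply mul_le_mul_of_nonneg_left _ (Real.rpow_nonneg hv'.le _)
          rw [div_le_iff₀ hv']
          nlinarith
        calc (u - a) ^ (p - 1) * v ≤ (v - a) ^ (p - 1) * ((u - a) / (v - a)) * v :=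
              mul_le_mul_of_nonneg_right hr hv.le
          _ ≤ (v - a) ^ (p - 1) * u := hlast
    · -- u ≤ a ≤ v
      have l : |u - a| ^ (p - 2) * (u - a) / u ≤ 0 :=
        div_nonpos_of_nonpos_of_nonneg
          (mul_nonpos_of_nonneg_of_nonpos (Real.rpow_nonneg (abs_nonneg _) _) (by linarith)) hu.le
      have r : 0 ≤ |v - a| ^ (p - 2) * (v - a) / v :=
        div_nonneg (mul_nonneg (Real.rpow_nonneg (abs_nonneg _) _) (by linarith)) hv.le
      linarith

lemma phiD_eq (a p : ℝ) {t : ℝ} (ht : 0 < t) :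
    phiD a p t = p / 2 * (|Real.sqrt t - a| ^ (p - 2) * (Real.sqrt t - a) / Real.sqrt t) := by
  have hst : 0 < Real.sqrt t := Real.sqrt_pos.2 ht
  have h1 : ((Real.sqrt t - a) ^ 2) ^ (p / 2 - 1) = |Real.sqrt t - a| ^ (p - 2) := by
    rw [sq_rpow_eq]
    congr 1
    ring
  unfold phiD; rw [h1]
  field_simp
  ring

lemma phiD_mono (a p : ℝ) (hp : 2 ≤ p) (ha : 0 ≤ a) {s t : ℝ} (hs : 0 < s) (hst : s ≤ t) :
    phiD a p s ≤ phiD a p t := by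
  have ht : 0 < t := lt_of_lt_of_le hs hst
  rw [phiD_eq a p hs, phiD_eq a p ht]
  apply mul_le_mul_of_nonneg_left _ (by linarith : (0:ℝ) ≤ p / 2)
  exact eta_mono hp ha (Real.sqrt_pos.2 hs) (Real.sqrt_le_sqrt hst)

lemma phiF_convexOn (a p : ℝ) (hp : 2 ≤ p) (ha : 0 ≤ a) :
    ConvexOn ℝ (Set.Ici 0) (phiF a p) := by
  apply MonotoneOn.convexOn_of_deriv (convex_Ici 0)
  · -- continuity
    apply Continuous.continuousOn
    apply Continuous.rpow_const
    · exact (Real.continuous_sqrt.sub continuous_const).pow 2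
    · intro x
      exact Or.inr (by linarith)
  · rw [interior_Ici]
    intro t ht
    exact ((phiF_hasDerivAt a p hp ht).differentiableAt).differentiableWithinAt
  · rw [interior_Ici]
    intro s hs t ht hst
    rw [(phiF_hasDerivAt a p hp hs).deriv, (phiF_hasDerivAt a p hp ht).deriv]
    exact phiD_mono a p hp ha hs hst

/-- Tangent line inequality for `phiF` at positive points. -/
lemma phiF_tangent (a p : ℝ) (hp : 2 ≤ p) (ha : 0 ≤ a) (t u : ℝ) (ht : 0 < t) (hu : 0 ≤ u) :
    phiF a p t + phiD a p t * (u - t) ≤ phiF a p u := by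
  have hconv := phiF_convexOn a p hp ha
  have hder := phiF_hasDerivAt a p hp ht
  rcases lt_trichotomy t u with h | h | h
  · have hs := hconv.le_slope_of_hasDerivAt (Set.mem_Ici.2 ht.le) (Set.mem_Ici.2 hu) h hder
    rw [slope_def_field] at hs
    have hut : 0 < u - t := by linarith
    have h2 := (le_div_iff₀ hut).1 hs
    linarith
  · rw [h]; simp
  · have hs := hconv.slope_le_of_hasDerivAt (Set.mem_Ici.2 hu) (Set.mem_Ici.2 ht.le) h hder
    rw [slope_def_field] at hs
    have htu : 0 < t - u := by linarith
    have h2 := (div_le_iff₀ htu).1 hs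
    nlinarith

/-- `phiF a p (w²) = ||w| - a|^p`. -/
lemma phiF_sq (a p : ℝ) (w : ℝ) : phiF a p (w ^ 2) = |(|w| - a)| ^ p := by
  rw [phiF, Real.sqrt_sq_eq_abs, sq_rpow_eq]
  congr 1
  ring

end PhiAux

lemma pMean_coe_eq {k : ℕ} (p : ℝ) (hp : 0 < p) (v : Fin k → ℝ) :
    pMean (p : EReal) v = ((k : ℝ)⁻¹ * ∑ j, |v j| ^ p) ^ p⁻¹ := by
  rw [pMean, if_neg (EReal.coe_ne_top p), if_neg (EReal.coe_ne_bot p),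
    if_neg (by exact_mod_cast hp.ne' : ¬((p : EReal) = 0)),
    if_neg (by rw [EReal.toReal_coe]; rintro ⟨h, -⟩; linarith)]
  rw [EReal.toReal_coe]

/-- For `p ∈ [2,∞)`, `a ≥ 0`, `ε ≥ 0`, the set
`Ĥ = {x : ∃ σ ∈ {-1,1}^k, ⟨x - aσ⟩_p ≤ ε}` is Schur²-convex. -/
theorem hatB_schur2ConvexSet (k : ℕ) (hk : 1 ≤ k) (p : ℝ) (hp : 2 ≤ p)
    (a : ℝ) (ha : 0 ≤ a) (ε : ℝ) (hε : 0 ≤ ε) :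
    Schur2ConvexSet {x : Fin k → ℝ |
      ∃ s : Fin k → ℝ, (∀ i, s i = 1 ∨ s i = -1) ∧
        pMean (p : EReal) (fun i => x i - a * s i) ≤ ε} := by
  intro x y hx maj
  obtain ⟨s, hs, hpx⟩ := hx
  have hp0 : (0 : ℝ) < p := by linarith
  classical
  refine ⟨fun i => if 0 ≤ y i then 1 else -1,
    fun i => by by_cases h : 0 ≤ y i <;> simp [h], ?_⟩
  rw [pMean_coe_eq p hp0] at hpx ⊢
  -- key comparison of the p-th power sums
  have key : ∑ j, |y j - a * (if 0 ≤ y j then (1:ℝ) else -1)| ^ p ≤ ∑ j, |x j - a * s j| ^ p := by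
    have step1 : ∀ j, |y j - a * (if 0 ≤ y j then (1:ℝ) else -1)| ^ p = phiF a p (sqv y j) := by
      intro j
      rw [sqv, phiF_sq]
      by_cases h : 0 ≤ y j
      · rw [if_pos h, abs_of_nonneg h, mul_one]
      · rw [if_neg h]
        push_neg at h
        rw [abs_of_neg h, show -y j - a = -(y j - a * (-1)) by ring, abs_neg]
    have step3 : ∀ j, phiF a p (sqv x j) ≤ |x j - a * s j| ^ p := by
      intro j
      rw [sqv, phiF_sq]
      apply Real.rpow_le_rpow (abs_nonneg _) _ (by linarith)
      have h1 : |a * s j| = a := by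
        rcases hs j with h | h <;> rw [h] <;> simp [abs_of_nonneg ha]
      calc |(|x j| - a)| = |(|x j| - |a * s j|)| := by rw [h1]
        _ ≤ |x j - a * s j| := abs_abs_sub_abs_le_abs_sub _ _
    have step2 : ∑ j, phiF a p (sqv y j) ≤ ∑ j, phiF a p (sqv x j) := by
      apply karamata_fin (phiF a p) (phiD a p)
        (phiF_tangent a p hp ha) (fun s t hs hst => phiD_mono a p hp ha hs hst)
        (sqv x) (sqv y) (fun i => sq_nonneg _) (fun i => sq_nonneg _) maj
    calc ∑ j, |y j - a * (if 0 ≤ y j then (1:ℝ) else -1)| ^ p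
        = ∑ j, phiF a p (sqv y j) := Finset.sum_congr rfl fun j _ => step1 j
      _ ≤ ∑ j, phiF a p (sqv x j) := step2
      _ ≤ ∑ j, |x j - a * s j| ^ p := Finset.sum_le_sum fun j _ => step3 j
  refine le_trans (Real.rpow_le_rpow (by positivity) ?_ (by positivity)) hpx
  exact mul_le_mul_of_nonneg_left key (by positivity)
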